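/- Fix ζ̃² > 0. For w ∈ [0,1] define the maximum regret M(w) = max{ w², w² + ζ̃²(1−w)² − ζ̃²/(ζ̃²+1) }. Then M is uniquely minimized at w̃ = 1 − 1/√(ζ̃² + 1), and at this point both expressions inside the max are equal. -/

import Mathlib

/-- For ζ̃² > 0 and `M w = max{w², w² + ζ̃²(1-w)² − ζ̃²/(ζ̃²+1)}` on [0,1],
`M` is uniquely minimized at `w̃ = 1 − 1/√(ζ̃²+1)`, where the two branches of the max agree. -/
theorem minimax_regret_weight (z : ℝ) (hz : 0 < z) :
    (∀ w ∈ Set.Icc (0 : ℝ) 1, w ≠ 1 - 1 / Real.sqrt (z + 1) →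
      max ((1 - 1 / Real.sqrt (z + 1)) ^ 2)
          ((1 - 1 / Real.sqrt (z + 1)) ^ 2 + z * (1 - (1 - 1 / Real.sqrt (z + 1))) ^ 2
            - z / (z + 1)) <
        max (w ^ 2) (w ^ 2 + z * (1 - w) ^ 2 - z / (z + 1))) ∧
    (1 - 1 / Real.sqrt (z + 1)) ^ 2 =
      (1 - 1 / Real.sqrt (z + 1)) ^ 2 + z * (1 - (1 - 1 / Real.sqrt (z + 1))) ^ 2
        - z / (z + 1) := by
  set s := Real.sqrt (z + 1) with hs_def
  have hs2 : s ^ 2 = z + 1 := by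
    rw [hs_def, Real.sq_sqrt]; linarith
  have hs1 : 1 < s := by
    nlinarith [Real.sqrt_nonneg (z + 1)]
  have hs0 : s ≠ 0 := by linarith
  have heq : (1 - 1 / s) ^ 2 =
      (1 - 1 / s) ^ 2 + z * (1 - (1 - 1 / s)) ^ 2 - z / (z + 1) := by
    have : z * (1 - (1 - 1 / s)) ^ 2 = z / (z + 1) := by
      rw [← hs2]; field_simp; ring
    linarith
  refine ⟨?_, heq⟩
  intro w hw hne
  rw [← heq, max_self]
  obtain ⟨hw0, hw1⟩ := hw
  rcases lt_or_gt_of_ne hne with h | h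
  · -- w < w̃ : second branch is larger
    apply lt_max_of_lt_right
    have ht : s * (1 / s) = 1 := by field_simp
    have hzz : z / (z + 1) = z * (1 / s) ^ 2 := by rw [← hs2]; field_simp
    rw [hzz]
    have h1 : 0 < (1 - 1 / s) - w := by linarith
    have h2 : 0 < 2 * z - (1 + z) * (w + (1 - 1 / s)) := by nlinarith [ht, hs2]
    nlinarith [mul_pos h1 h2, hs2, ht]
  · -- w̃ < w : first branch suffices
    apply lt_max_of_lt_left
    have hwt0 : 0 ≤ 1 - 1 / s := by
      have : 1 / s < 1 := by
        rw [div_lt_one (by linarith)]; exact hs1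
      linarith
    nlinarith
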